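/- In a memory-augmented HMM with N memory cells, let g(x) = 1(b^T P(M_{j*} | X_{1:T} = x) ≥ 0) for b ∈ ℝ^{|𝕄|} and j* ∈ [N]. Assume stationarity of P(H_0) and the relaxed multi-memory non-degeneracy condition with recoverable states H* = {j*} × S*. Let R = {x ∈ X^T : P(X_{1:T} = x) > 0 and there exists i ∈ [T] with supp(P(H_i | X_{−i} = x_{−i})) ⊆ H*}. Then, with the prompt π defined by π_{(m_{1:N},j,s)} = 1 if m_{j*} ∈ supp(b) and 0 otherwise (inducing the modified sequence X̂ of length T+1 and x̂ = (z̃, x)), there exist attention-head parameters — a key matrix Θ^{(K)} ∈ ℝ^{(|H|+1)×|X|}, a query q ∈ ℝ^{|H|+1}, position embeddings β_1, …, β_{T+1} ∈ ℝ^{|H|+1}, value parameters Θ^{(V)} ∈ ℝ^{|𝕄||H|×|X|} and u ∈ ℝ^{|𝕄||H|} — such that for all x ∈ R: g(x) = 1( (1/|I|) Σ_{i ∈ I} u^T ((Θ^{(V)} Ĝ_i(x)) ⊙ ē_i(x)) ≥ 0 ), where Ĝ_i(x) = W v_i(x) with (v_i(x))_{(m,j,s)} = P(M_j = m, H_i =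 (j,s) | X̂_{−i} = x̂_{−i}) (and Ĝ_i(x) = 0 when P(X̂_{−i} = x̂_{−i}) = 0), ē_i(x) ∈ ℝ^{|𝕄||H|} is the value embedding at position i given by ē_i(x)_{(m,j,s)} = W_{x_{i−1},(m,j,s)} for i > 1 and ē_1(x)_{(m,j,s)} = (1/|𝕄|^{N−1}) Σ_{m'_{1:N} : m'_j = m} π_{(m'_{1:N},j,s)}, and I = argmax_{i ∈ [T+1]} { q^T (Θ^{(K)} Ĝ_i(x) + β_i) }. -/

import Mathlib

open scoped Classical
open Matrix

noncomputable section

/-- Forward pass for a Markov chain with transition matrix `A`. -/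
def fwdVec {H : Type*} [Fintype H] (A : Matrix H H ℝ) :
    (H → ℝ) → List (H → ℝ) → (H → ℝ)
  | μ, [] => μ
  | μ, v :: vs => fwdVec A (A.mulVec fun h => μ h * v h) vs

/-- `mJointAt A μ W m x i g = P(H_i = g, X_{−i} = x_{−i} | M = m)` in a
memory-augmented HMM (hidden chain `H_1, …, H_T`, `P(H_1) = A μ`). -/
def mJointAt {𝕄 S X : Type*} {N T : ℕ} [Fintype S] [DecidableEq S]
    (A : Matrix (Fin N × S) (Fin N × S) ℝ) (μ : Fin N × S → ℝ)
    (W : X → 𝕄 → Fin N × S → ℝ) (m : Fin N → 𝕄)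
    (x : Fin T → X) (i : Fin T) (g : Fin N × S) : ℝ :=
  ∑ h, fwdVec A (A.mulVec μ)
    (List.ofFn fun k : Fin T =>
      if k = i then (fun g' => if g' = g then 1 else 0)
      else fun g' => W (x k) (m g'.1) g') h

/-- `mZ … x i = P(X_{−i} = x_{−i})`. -/
def mZ {𝕄 S X : Type*} {N T : ℕ} [Fintype 𝕄] [Fintype S] [DecidableEq S]
    (pM : (Fin N → 𝕄) → ℝ) (A : Matrix (Fin N × S) (Fin N × S) ℝ)
    (μ : Fin N × S → ℝ) (W : X → 𝕄 → Fin N × S → ℝ)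
    (x : Fin T → X) (i : Fin T) : ℝ :=
  ∑ m, pM m * ∑ g, mJointAt A μ W m x i g

/-- `mSeqPm … m x = P(X_{1:T} = x | M = m)`. -/
def mSeqPm {𝕄 S X : Type*} {N T : ℕ} [Fintype S]
    (A : Matrix (Fin N × S) (Fin N × S) ℝ) (μ : Fin N × S → ℝ)
    (W : X → 𝕄 → Fin N × S → ℝ) (m : Fin N → 𝕄) (x : Fin T → X) : ℝ :=
  ∑ h, fwdVec A (A.mulVec μ)
    (List.ofFn fun k : Fin T => fun g' => W (x k) (m g'.1) g') h

/-- `mSeqP … x = P(X_{1:T} = x)`. -/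
def mSeqP {𝕄 S X : Type*} {N T : ℕ} [Fintype 𝕄] [Fintype S]
    (pM : (Fin N → 𝕄) → ℝ) (A : Matrix (Fin N × S) (Fin N × S) ℝ)
    (μ : Fin N × S → ℝ) (W : X → 𝕄 → Fin N × S → ℝ) (x : Fin T → X) : ℝ :=
  ∑ m, pM m * mSeqPm A μ W m x

/-- `mGtok … x i z = P(X_i = z | X_{−i} = x_{−i})`, the pretrained model
output `G_i(x)` at position `i`. -/
def mGtok {𝕄 S X : Type*} {N T : ℕ} [Fintype 𝕄] [Fintype S] [DecidableEq S]
    (pM : (Fin N → 𝕄) → ℝ) (A : Matrix (Fin N × S) (Fin N × S) ℝ)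
    (μ : Fin N × S → ℝ) (W : X → 𝕄 → Fin N × S → ℝ)
    (x : Fin T → X) (i : Fin T) (z : X) : ℝ :=
  (∑ m, pM m * ∑ g, mJointAt A μ W m x i g * W z (m g.1) g) / mZ pM A μ W x i

/-- `mPostH … x i g = P(H_i = g | X_{−i} = x_{−i})`. -/
def mPostH {𝕄 S X : Type*} {N T : ℕ} [Fintype 𝕄] [Fintype S] [DecidableEq S]
    (pM : (Fin N → 𝕄) → ℝ) (A : Matrix (Fin N × S) (Fin N × S) ℝ)
    (μ : Fin N × S → ℝ) (W : X → 𝕄 → Fin N × S → ℝ)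
    (x : Fin T → X) (i : Fin T) (g : Fin N × S) : ℝ :=
  (∑ m, pM m * mJointAt A μ W m x i g) / mZ pM A μ W x i

/-- The 0/1 prompt of the paper: `π_{(m_{1:N},j,s)} = 1` if `m_{j*} ∈ supp(b)`
and `0` otherwise (it does not depend on `(j,s)`). -/
def promptV {𝕄 : Type*} {N : ℕ} (b : 𝕄 → ℝ) (jstar : Fin N)
    (m : Fin N → 𝕄) : ℝ :=
  if b (m jstar) ≠ 0 then 1 else 0

/-- Conditioned on `M = m`, the emission-likelihood vector at position `k`
(0-indexed) of the modified sequence `x̂ = (z̃, x_1, …, x_T)`: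
at position `0` the fake token `z̃` has likelihood `π_{(m,j,s)}`, and at
position `k ≥ 1` the token `x_k` has likelihood `W (x_k) (m j) (j,s)`. -/
def hatEm {𝕄 S X : Type*} {N T : ℕ} (W : X → 𝕄 → Fin N × S → ℝ)
    (b : 𝕄 → ℝ) (jstar : Fin N) (m : Fin N → 𝕄) (x : Fin T → X)
    (k : Fin (T + 1)) : Fin N × S → ℝ :=
  if hk : (k : ℕ) = 0 then fun _ => promptV b jstar m
  else fun g => W (x ⟨(k : ℕ) - 1, by have := k.isLt; omega⟩) (m g.1) g

/-- `hatJointAt … m x i g = P(H_i = g, X̂_{−i} = x̂_{−i} | M = m)` for the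
modified sequence `X̂` of length `T+1` (hidden chain `H_1, …, H_{T+1}`,
`P(H_1) = A μ`). -/
def hatJointAt {𝕄 S X : Type*} {N T : ℕ} [Fintype S] [DecidableEq S]
    (A : Matrix (Fin N × S) (Fin N × S) ℝ) (μ : Fin N × S → ℝ)
    (W : X → 𝕄 → Fin N × S → ℝ) (b : 𝕄 → ℝ) (jstar : Fin N)
    (m : Fin N → 𝕄) (x : Fin T → X) (i : Fin (T + 1)) (g : Fin N × S) : ℝ :=
  ∑ h, fwdVec A (A.mulVec μ)
    (List.ofFn fun k : Fin (T + 1) =>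
      if k = i then (fun g' => if g' = g then 1 else 0)
      else hatEm W b jstar m x k) h

/-- `hatZ … x i = P(X̂_{−i} = x̂_{−i})`. -/
def hatZ {𝕄 S X : Type*} {N T : ℕ} [Fintype 𝕄] [Fintype S] [DecidableEq S]
    (pM : (Fin N → 𝕄) → ℝ) (A : Matrix (Fin N × S) (Fin N × S) ℝ)
    (μ : Fin N × S → ℝ) (W : X → 𝕄 → Fin N × S → ℝ) (b : 𝕄 → ℝ)
    (jstar : Fin N) (x : Fin T → X) (i : Fin (T + 1)) : ℝ :=
  ∑ m, pM m * ∑ g, hatJointAt A μ W b jstar m x i g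

/-- `hatSeqPm … m x = P(X̂ = x̂ | M = m)`. -/
def hatSeqPm {𝕄 S X : Type*} {N T : ℕ} [Fintype S]
    (A : Matrix (Fin N × S) (Fin N × S) ℝ) (μ : Fin N × S → ℝ)
    (W : X → 𝕄 → Fin N × S → ℝ) (b : 𝕄 → ℝ) (jstar : Fin N)
    (m : Fin N → 𝕄) (x : Fin T → X) : ℝ :=
  ∑ h, fwdVec A (A.mulVec μ) (List.ofFn (hatEm W b jstar m x)) h

/-- `hatSeqP … x = P(X̂ = x̂)`. -/
def hatSeqP {𝕄 S X : Type*} {N T : ℕ} [Fintype 𝕄] [Fintype S]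
    (pM : (Fin N → 𝕄) → ℝ) (A : Matrix (Fin N × S) (Fin N × S) ℝ)
    (μ : Fin N × S → ℝ) (W : X → 𝕄 → Fin N × S → ℝ) (b : 𝕄 → ℝ)
    (jstar : Fin N) (x : Fin T → X) : ℝ :=
  ∑ m, pM m * hatSeqPm A μ W b jstar m x

/-- `hatGvec … x i z = (W v_i(x)) z` where
`(v_i(x))_{(m,j,s)} = P(M_j = m, H_i = (j,s) | X̂_{−i} = x̂_{−i})`:
the model output `Ĝ_i(x)` on the prompted input. -/
def hatGvec {𝕄 S X : Type*} {N T : ℕ} [Fintype 𝕄] [Fintype S] [Fintype X]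
    [DecidableEq 𝕄] [DecidableEq S]
    (pM : (Fin N → 𝕄) → ℝ) (A : Matrix (Fin N × S) (Fin N × S) ℝ)
    (μ : Fin N × S → ℝ) (W : X → 𝕄 → Fin N × S → ℝ) (b : 𝕄 → ℝ)
    (jstar : Fin N) (x : Fin T → X) (i : Fin (T + 1)) (z : X) : ℝ :=
  ∑ p : 𝕄 × (Fin N × S), W z p.1 p.2 *
    ((∑ m, if m p.2.1 = p.1 then pM m * hatJointAt A μ W b jstar m x i p.2 else 0)
      / hatZ pM A μ W b jstar x i)

/-- `hatGtot` is `Ĝ_i(x)` with the convention `Ĝ_i(x) = 0` when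
`P(X̂_{−i} = x̂_{−i}) = 0`. -/
def hatGtot {𝕄 S X : Type*} {N T : ℕ} [Fintype 𝕄] [Fintype S] [Fintype X]
    [DecidableEq 𝕄] [DecidableEq S]
    (pM : (Fin N → 𝕄) → ℝ) (A : Matrix (Fin N × S) (Fin N × S) ℝ)
    (μ : Fin N × S → ℝ) (W : X → 𝕄 → Fin N × S → ℝ) (b : 𝕄 → ℝ)
    (jstar : Fin N) (x : Fin T → X) (i : Fin (T + 1)) (z : X) : ℝ :=
  if 0 < hatZ pM A μ W b jstar x i then hatGvec pM A μ W b jstar x i z else 0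

/-- The value-embedding sequence:
`ē_1(x)_{(m,j,s)} = (1/|𝕄|^{N−1}) ∑_{m' : m'_j = m} π_{(m',j,s)}` (with `π`
the 0/1 prompt), and `ē_i(x)_{(m,j,s)} = W_{x_{i−1},(m,j,s)}` for `i > 1`. -/
def mEvec {𝕄 S X : Type*} {N T : ℕ} [Fintype 𝕄]
    (W : X → 𝕄 → Fin N × S → ℝ) (b : 𝕄 → ℝ) (jstar : Fin N)
    (x : Fin T → X) (i : Fin (T + 1)) : 𝕄 × (Fin N × S) → ℝ :=
  if hk : (i : ℕ) = 0 then
    fun p => ((Fintype.card 𝕄 : ℝ) ^ (N - 1))⁻¹ *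
      ∑ m' : Fin N → 𝕄, if m' p.2.1 = p.1 then promptV b jstar m' else 0
  else fun p => W (x ⟨(i : ℕ) - 1, by have := i.isLt; omega⟩) p.1 p.2

/-- `mMemPost … x m0 = P(M_{j*} = m0 | X_{1:T} = x)`. -/
def mMemPost {𝕄 S X : Type*} {N T : ℕ} [Fintype 𝕄] [Fintype S] [DecidableEq 𝕄]
    (pM : (Fin N → 𝕄) → ℝ) (A : Matrix (Fin N × S) (Fin N × S) ℝ)
    (μ : Fin N × S → ℝ) (W : X → 𝕄 → Fin N × S → ℝ) (jstar : Fin N)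
    (x : Fin T → X) (m0 : 𝕄) : ℝ :=
  (∑ m, if m jstar = m0 then pM m * mSeqPm A μ W m x else 0) / mSeqP pM A μ W x

/-- Column of the emission matrix. -/
def colW {𝕄 S X : Type*} {N : ℕ} (W : X → 𝕄 → Fin N × S → ℝ)
    (p : 𝕄 × (Fin N × S)) : X → ℝ := fun z => W z p.1 p.2

/-- The "good" (recoverable) indices. -/
def GoodP {𝕄 S : Type*} {N : ℕ} (b : 𝕄 → ℝ) (jstar : Fin N) (Sstar : Finset S)
    (p : 𝕄 × (Fin N × S)) : Prop := b p.1 ≠ 0 ∧ p.2.1 = jstar ∧ p.2.2 ∈ Sstar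

/-- Numerator of the posterior vector `v_i`. -/
def numH {𝕄 S X : Type*} {N T : ℕ} [Fintype 𝕄] [Fintype S] [DecidableEq 𝕄] [DecidableEq S]
    (pM : (Fin N → 𝕄) → ℝ) (A : Matrix (Fin N × S) (Fin N × S) ℝ)
    (μ : Fin N × S → ℝ) (W : X → 𝕄 → Fin N × S → ℝ) (b : 𝕄 → ℝ)
    (jstar : Fin N) (x : Fin T → X) (i : Fin (T + 1)) (p : 𝕄 × (Fin N × S)) : ℝ :=
  ∑ m, if m p.2.1 = p.1 then pM m * hatJointAt A μ W b jstar m x i p.2 else 0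
section Helpers

variable {H : Type*} [Fintype H] (A : Matrix H H ℝ)

lemma fwdVec_cons (μ : H → ℝ) (e : H → ℝ) (l : List (H → ℝ)) :
    fwdVec A μ (e :: l) = fwdVec A (A.mulVec fun h => μ h * e h) l := rfl

lemma fwdVec_sum {ι : Type*} (t : Finset ι) (f : ι → H → ℝ) (l : List (H → ℝ)) :
    fwdVec A (fun h => ∑ g ∈ t, f g h) l = fun h => ∑ g ∈ t, fwdVec A (f g) l h := by
  induction l generalizing f with
  | nil => rfl
  | cons e l ih =>
    simp only [fwdVec_cons]
    have h1 : (A.mulVec fun h => (∑ g ∈ t, f g h) * e h)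
        = fun h' => ∑ g ∈ t, A.mulVec (fun h => f g h * e h) h' := by
      funext h'
      simp only [Matrix.mulVec, dotProduct, Finset.sum_mul, Finset.mul_sum]
      rw [Finset.sum_comm]
    rw [h1, ih]

lemma fwdVec_smul (c : ℝ) (μ : H → ℝ) (l : List (H → ℝ)) :
    fwdVec A (fun h => c * μ h) l = fun h => c * fwdVec A μ l h := by
  induction l generalizing μ with
  | nil => rfl
  | cons e l ih =>
    simp only [fwdVec_cons]
    have h1 : (A.mulVec fun h => (c * μ h) * e h)
        = fun h' => c * A.mulVec (fun h => μ h * e h) h' := by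
      funext h'
      simp only [Matrix.mulVec, dotProduct, Finset.mul_sum]
      exact Finset.sum_congr rfl fun h _ => by ring
    rw [h1, ih]

lemma fwdVec_nonneg (hA0 : ∀ g g', 0 ≤ A g' g) (μ : H → ℝ) (l : List (H → ℝ))
    (hμ : ∀ h, 0 ≤ μ h) (hl : ∀ e ∈ l, ∀ h, 0 ≤ e h) (h : H) :
    0 ≤ fwdVec A μ l h := by
  induction l generalizing μ with
  | nil => exact hμ h
  | cons e l ih =>
    rw [fwdVec_cons]
    refine ih _ (fun h' => ?_) (fun e' he' h' => hl e' (List.mem_cons_of_mem _ he') h')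
    exact Finset.sum_nonneg fun g _ => mul_nonneg (hA0 _ _)
      (mul_nonneg (hμ g) (hl e (List.mem_cons_self) g))

lemma fwd_sumout [DecidableEq H] {n : ℕ} :
    ∀ (e : Fin n → H → ℝ) (i : Fin n) (μ : H → ℝ),
    ∑ g, e i g * ∑ h, fwdVec A μ
        (List.ofFn fun k => if k = i then (fun g' => if g' = g then (1:ℝ) else 0) else e k) h
      = ∑ h, fwdVec A μ (List.ofFn e) h := by
  induction n with
  | zero => exact fun _ i _ => i.elim0
  | succ n ih =>
    intro e i μ
    induction i using Fin.cases with
    | zero =>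
      simp only [List.ofFn_succ, Fin.succ_ne_zero, if_neg, if_pos rfl, fwdVec_cons]
      have key : ∀ g : H,
          (A.mulVec fun h => μ h * if h = g then (1:ℝ) else 0)
            = fun h' => A h' g * μ g := by
        intro g; funext h'
        simp only [Matrix.mulVec, dotProduct]
        rw [Finset.sum_eq_single g]
        · simp
        · intro h _ hh; simp [hh]
        · simp
      have h2 : (A.mulVec fun h => μ h * e 0 h)
          = fun h' => ∑ g, e 0 g * (A h' g * μ g) := by
        funext h'
        simp only [Matrix.mulVec, dotProduct]
        exact Finset.sum_congr rfl fun g _ => by ring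
      calc ∑ g, e 0 g * ∑ h, fwdVec A (A.mulVec fun h => μ h * if h = g then (1:ℝ) else 0)
              (List.ofFn fun k : Fin n => e k.succ) h
          = ∑ h, ∑ g, fwdVec A (fun h' => e 0 g * (A h' g * μ g))
              (List.ofFn fun k : Fin n => e k.succ) h := by
            rw [Finset.sum_comm]
            refine Finset.sum_congr rfl fun g _ => ?_
            rw [Finset.mul_sum]
            refine Finset.sum_congr rfl fun h _ => ?_
            rw [key, fwdVec_smul]
        _ = ∑ h, fwdVec A (A.mulVec fun h => μ h * e 0 h)
              (List.ofFn fun k : Fin n => e k.succ) h := by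
            refine Finset.sum_congr rfl fun h _ => ?_
            rw [h2, fwdVec_sum A Finset.univ (fun g h' => e 0 g * (A h' g * μ g))]
        _ = _ := rfl
    | succ j =>
      simp only [List.ofFn_succ, fwdVec_cons]
      have hne : ∀ k : Fin n, ((0 : Fin (n+1)) = j.succ) = False := by
        intro k; simp [(Fin.succ_ne_zero j).symm]
      have h0 : ((0 : Fin (n+1)) = j.succ) = False := by
        simp [(Fin.succ_ne_zero j).symm]
      simp only [h0, if_false]
      have hlist : ∀ g : H, (List.ofFn fun k : Fin n =>
          if k.succ = j.succ then (fun g' => if g' = g then (1:ℝ) else 0) else e k.succ)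
          = List.ofFn fun k : Fin n =>
            if k = j then (fun g' => if g' = g then (1:ℝ) else 0) else (fun k' : Fin n => e k'.succ) k := by
        intro g
        congr 1
        funext k
        simp [Fin.succ_inj]
      calc ∑ g, e j.succ g * ∑ h, fwdVec A (A.mulVec fun h => μ h * e 0 h)
              (List.ofFn fun k : Fin n =>
                if k.succ = j.succ then (fun g' => if g' = g then (1:ℝ) else 0) else e k.succ) h
          = ∑ g, (fun k : Fin n => e k.succ) j g * ∑ h, fwdVec A (A.mulVec fun h => μ h * e 0 h)
              (List.ofFn fun k : Fin n =>
                if k = j then (fun g' => if g' = g then (1:ℝ) else 0)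
                else (fun k' : Fin n => e k'.succ) k) h := by
            refine Finset.sum_congr rfl fun g _ => ?_
            rw [hlist g]
        _ = _ := ih (fun k => e k.succ) j (A.mulVec fun h => μ h * e 0 h)
end Helpers
set_option linter.unusedSectionVars false
section Helpers2

variable {𝕄 S X : Type*} {N T : ℕ} [Fintype 𝕄] [Fintype S] [DecidableEq S]
variable [DecidableEq 𝕄]
variable (A : Matrix (Fin N × S) (Fin N × S) ℝ) (μ : Fin N × S → ℝ)
variable (W : X → 𝕄 → Fin N × S → ℝ) (b : 𝕄 → ℝ) (jstar : Fin N)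

lemma hatEm_zero (m : Fin N → 𝕄) (x : Fin T → X) :
    hatEm W b jstar m x 0 = fun _ => promptV b jstar m := by
  simp [hatEm]

lemma hatEm_succ (m : Fin N → 𝕄) (x : Fin T → X) (k : Fin T) :
    hatEm W b jstar m x k.succ = fun g => W (x k) (m g.1) g := by
  have h1 : ((k.succ : Fin (T+1)) : ℕ) = (k : ℕ) + 1 := Fin.val_succ k
  simp only [hatEm, h1]
  rw [dif_neg (by omega)]
  congr 1

lemma fwd_head_const (hstat : A.mulVec μ = μ) (c : ℝ) (l : List (Fin N × S → ℝ)) :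
    ∑ h, fwdVec A (A.mulVec μ) ((fun _ => c) :: l) h
      = c * ∑ h, fwdVec A (A.mulVec μ) l h := by
  rw [fwdVec_cons]
  have hAA : A.mulVec (A.mulVec μ) = A.mulVec μ := by conv_lhs => rw [hstat]
  have key : ∀ ν : Fin N × S → ℝ, A.mulVec (fun h => ν h * c) = fun h => c * (A.mulVec ν) h := by
    intro ν; funext h'
    simp only [Matrix.mulVec, dotProduct, Finset.mul_sum]
    exact Finset.sum_congr rfl fun g _ => by ring
  have h1 : (A.mulVec fun h => (A.mulVec μ) h * c) = fun h => c * (A.mulVec μ) h :=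
    (key _).trans (by rw [hAA])
  rw [h1, fwdVec_smul, Finset.mul_sum]

lemma hatSeqPm_eq (hstat : A.mulVec μ = μ) (m : Fin N → 𝕄) (x : Fin T → X) :
    hatSeqPm A μ W b jstar m x = promptV b jstar m * mSeqPm A μ W m x := by
  unfold hatSeqPm mSeqPm
  rw [List.ofFn_succ, hatEm_zero]
  have h2 : (List.ofFn fun k : Fin T => hatEm W b jstar m x k.succ)
      = List.ofFn fun k : Fin T => fun g' => W (x k) (m g'.1) g' := by
    simp only [hatEm_succ]
  rw [h2, fwd_head_const A μ hstat]

lemma hatJointAt_succ (hstat : A.mulVec μ = μ) (m : Fin N → 𝕄) (x : Fin T → X)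
    (j : Fin T) (g : Fin N × S) :
    hatJointAt A μ W b jstar m x j.succ g = promptV b jstar m * mJointAt A μ W m x j g := by
  unfold hatJointAt mJointAt
  simp only [List.ofFn_succ, if_neg (Ne.symm (Fin.succ_ne_zero j)), hatEm_zero]
  have hl : (List.ofFn fun k : Fin T =>
        if k.succ = j.succ then (fun g' => if g' = g then (1:ℝ) else 0)
        else hatEm W b jstar m x k.succ)
      = List.ofFn fun k : Fin T =>
        if k = j then (fun g' => if g' = g then (1:ℝ) else 0)
        else fun g' => W (x k) (m g'.1) g' := by
    congr 1; funext k
    simp only [Fin.succ_inj, hatEm_succ]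
  rw [hl, fwd_head_const A μ hstat]

lemma mSeqPm_sumout (m : Fin N → 𝕄) (x : Fin T → X) (i : Fin T) :
    ∑ g, W (x i) (m g.1) g * mJointAt A μ W m x i g = mSeqPm A μ W m x := by
  unfold mJointAt mSeqPm
  exact fwd_sumout A (fun k => fun g' => W (x k) (m g'.1) g') i (A.mulVec μ)

lemma hatSeqPm_sumout (m : Fin N → 𝕄) (x : Fin T → X) (i : Fin (T+1)) :
    ∑ g, hatEm W b jstar m x i g * hatJointAt A μ W b jstar m x i g
      = hatSeqPm A μ W b jstar m x := by
  unfold hatJointAt hatSeqPm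
  exact fwd_sumout A (hatEm W b jstar m x) i (A.mulVec μ)

lemma hatEm_nonneg (hW0 : ∀ z m0 g, 0 ≤ W z m0 g) (m : Fin N → 𝕄) (x : Fin T → X)
    (k : Fin (T+1)) (g : Fin N × S) : 0 ≤ hatEm W b jstar m x k g := by
  unfold hatEm
  split
  · unfold promptV; split <;> norm_num
  · exact hW0 _ _ _

lemma mJointAt_nonneg (hA0 : ∀ g g', 0 ≤ A g' g) (hμ0 : ∀ g, 0 ≤ μ g)
    (hW0 : ∀ z m0 g, 0 ≤ W z m0 g) (m : Fin N → 𝕄) (x : Fin T → X) (i : Fin T)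
    (g : Fin N × S) : 0 ≤ mJointAt A μ W m x i g := by
  refine Finset.sum_nonneg fun h _ => fwdVec_nonneg A hA0 _ _
    (fun h' => Finset.sum_nonneg fun g' _ => mul_nonneg (hA0 _ _) (hμ0 g')) ?_ h
  intro e he h'
  obtain ⟨k, rfl⟩ := List.mem_ofFn.1 he
  split
  · dsimp only
    split <;> norm_num
  · exact hW0 _ _ _

lemma hatJointAt_nonneg (hA0 : ∀ g g', 0 ≤ A g' g) (hμ0 : ∀ g, 0 ≤ μ g)
    (hW0 : ∀ z m0 g, 0 ≤ W z m0 g) (m : Fin N → 𝕄) (x : Fin T → X) (i : Fin (T+1))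
    (g : Fin N × S) : 0 ≤ hatJointAt A μ W b jstar m x i g := by
  refine Finset.sum_nonneg fun h _ => fwdVec_nonneg A hA0 _ _
    (fun h' => Finset.sum_nonneg fun g' _ => mul_nonneg (hA0 _ _) (hμ0 g')) ?_ h
  intro e he h'
  obtain ⟨k, rfl⟩ := List.mem_ofFn.1 he
  split
  · dsimp only
    split <;> norm_num
  · exact hatEm_nonneg W b jstar hW0 m x k h'

end Helpers2
section Dual
variable {𝕄 S X : Type*} {N : ℕ} [Fintype 𝕄] [Fintype S] [Fintype X]

lemma exists_dual (W : X → 𝕄 → Fin N × S → ℝ) (b : 𝕄 → ℝ) (jstar : Fin N) (Sstar : Finset S)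
    (hli : LinearIndependent ℝ
      (fun p : {m0 : 𝕄 // b m0 ≠ 0} × {s : S // s ∈ Sstar} =>
        fun z : X => W z p.1.1 (jstar, p.2.1)))
    (hspan : Submodule.span ℝ
        {f : X → ℝ | ∃ m0 : 𝕄, ∃ s : S,
          b m0 ≠ 0 ∧ s ∈ Sstar ∧ f = fun z => W z m0 (jstar, s)}
      ⊓ Submodule.span ℝ
        {f : X → ℝ |
          (∃ m0 : 𝕄, ∃ s : S, b m0 ≠ 0 ∧ s ∉ Sstar ∧ f = fun z => W z m0 (jstar, s))
          ∨ (∃ m0 : 𝕄, ∃ j : Fin N, ∃ s : S, j ≠ jstar ∧ f = fun z => W z m0 (j, s))}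
      = ⊥) :
    ∃ ψ : (𝕄 × (Fin N × S)) → ((X → ℝ) →ₗ[ℝ] ℝ),
      (∀ p, ¬(b p.1 ≠ 0 ∧ p.2.1 = jstar ∧ p.2.2 ∈ Sstar) → ψ p = 0) ∧
      (∀ p p', (b p.1 ≠ 0 ∧ p.2.1 = jstar ∧ p.2.2 ∈ Sstar) →
        (b p'.1 ≠ 0 ∧ p'.2.1 = jstar ∧ p'.2.2 ∈ Sstar) →
        ψ p (colW W p') = if p' = p then 1 else 0) ∧
      (∀ p f, (b p.1 ≠ 0 ∧ p.2.1 = jstar ∧ p.2.2 ∈ Sstar) →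
        f ∈ ({f : X → ℝ |
          (∃ m0 : 𝕄, ∃ s : S, b m0 ≠ 0 ∧ s ∉ Sstar ∧ f = fun z => W z m0 (jstar, s))
          ∨ (∃ m0 : 𝕄, ∃ j : Fin N, ∃ s : S, j ≠ jstar ∧ f = fun z => W z m0 (j, s))} : Set (X → ℝ)) →
        ψ p f = 0) := by
  classical
  set badset : Set (X → ℝ) := {f : X → ℝ |
      (∃ m0 : 𝕄, ∃ s : S, b m0 ≠ 0 ∧ s ∉ Sstar ∧ f = fun z => W z m0 (jstar, s))
      ∨ (∃ m0 : 𝕄, ∃ j : Fin N, ∃ s : S, j ≠ jstar ∧ f = fun z => W z m0 (j, s))} with hbadset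
  set Vbar : Submodule ℝ (X → ℝ) := Submodule.span ℝ badset with hVbar
  set colG : {m0 : 𝕄 // b m0 ≠ 0} × {s : S // s ∈ Sstar} → (X → ℝ) :=
    (fun p => fun z : X => W z p.1.1 (jstar, p.2.1)) with hcolG
  have hrange : Set.range colG
      = {f : X → ℝ | ∃ m0 : 𝕄, ∃ s : S, b m0 ≠ 0 ∧ s ∈ Sstar ∧ f = fun z => W z m0 (jstar, s)} := by
    ext f; constructor
    · rintro ⟨q, rfl⟩; exact ⟨q.1.1, q.2.1, q.1.2, q.2.2, rfl⟩
    · rintro ⟨m0, s, hb, hs, rfl⟩; exact ⟨(⟨m0, hb⟩, ⟨s, hs⟩), rfl⟩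
  have hdisj' : Disjoint (Submodule.span ℝ (Set.range colG)) (LinearMap.ker Vbar.mkQ) := by
    rw [Submodule.ker_mkQ, disjoint_iff, hrange]
    exact hspan
  have hQli : LinearIndependent ℝ (Vbar.mkQ ∘ colG) := hli.map hdisj'
  set UQ := Submodule.span ℝ (Set.range (Vbar.mkQ ∘ colG)) with hUQ
  set basisB := Module.Basis.span hQli with hbasisB
  obtain ⟨U', hcompl⟩ := Submodule.exists_isCompl UQ
  set proj := Submodule.linearProjOfIsCompl UQ U' hcompl with hproj
  set ψ' : {m0 : 𝕄 // b m0 ≠ 0} × {s : S // s ∈ Sstar} → ((X → ℝ) →ₗ[ℝ] ℝ) :=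
    fun q => (basisB.coord q).comp (proj.comp Vbar.mkQ) with hψ'
  have hψ'col : ∀ q q', ψ' q (colG q') = if q' = q then 1 else 0 := by
    intro q q'
    have hmem : Vbar.mkQ (colG q') ∈ UQ := Submodule.subset_span ⟨q', rfl⟩
    have h1 : proj (Vbar.mkQ (colG q')) = ⟨Vbar.mkQ (colG q'), hmem⟩ :=
      Submodule.linearProjOfIsCompl_apply_left hcompl ⟨Vbar.mkQ (colG q'), hmem⟩
    have h2 : (⟨Vbar.mkQ (colG q'), hmem⟩ : UQ) = basisB q' :=
      (Module.Basis.span_apply hQli q').symm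
    simp only [hψ', LinearMap.comp_apply, h1, h2, Module.Basis.coord_apply, Module.Basis.repr_self,
      Finsupp.single_apply]
  have hψ'bar : ∀ q f, f ∈ badset → ψ' q f = 0 := by
    intro q f hf
    have h0 : Vbar.mkQ f = 0 := (Submodule.Quotient.mk_eq_zero _).2 (Submodule.subset_span hf)
    simp only [hψ', LinearMap.comp_apply, h0, map_zero]
  refine ⟨fun p => if h : (b p.1 ≠ 0 ∧ p.2.1 = jstar ∧ p.2.2 ∈ Sstar)
      then ψ' (⟨p.1, h.1⟩, ⟨p.2.2, h.2.2⟩) else 0, ?_, ?_, ?_⟩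
  · intro p hp; dsimp only; rw [dif_neg hp]
  · intro p p' hp hp'
    dsimp only
    rw [dif_pos hp]
    have hc : colW W p' = colG (⟨p'.1, hp'.1⟩, ⟨p'.2.2, hp'.2.2⟩) := by
      have h2 : p'.2 = (jstar, p'.2.2) := Prod.ext hp'.2.1 rfl
      unfold colW
      rw [hcolG]; dsimp only; rw [← h2]
    rw [hc, hψ'col]
    by_cases hpp : p' = p
    · subst hpp; rw [if_pos rfl, if_pos rfl]
    · rw [if_neg hpp, if_neg]
      intro h
      apply hpp
      have e1 : p'.1 = p.1 := congrArg (fun q => q.1.1) h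
      have e2 : p'.2.2 = p.2.2 := congrArg (fun q => q.2.1) h
      have e3 : p'.2 = p.2 := by
        have := hp.2.1; have := hp'.2.1
        refine Prod.ext ?_ e2
        rw [hp.2.1, hp'.2.1]
      exact Prod.ext e1 e3
  · intro p f hp hf
    dsimp only
    rw [dif_pos hp]
    exact hψ'bar _ f hf

end Dual
set_option linter.unusedSectionVars false
section Helpers4

variable {𝕄 S X : Type*} {N T : ℕ} [Fintype 𝕄] [Fintype S] [Fintype X]
  [DecidableEq 𝕄] [DecidableEq S]
variable (pM : (Fin N → 𝕄) → ℝ) (A : Matrix (Fin N × S) (Fin N × S) ℝ)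
  (μ : Fin N × S → ℝ) (W : X → 𝕄 → Fin N × S → ℝ) (b : 𝕄 → ℝ) (jstar : Fin N)

lemma numH_nonneg (hpM0 : ∀ m, 0 ≤ pM m) (hA0 : ∀ g g', 0 ≤ A g' g) (hμ0 : ∀ g, 0 ≤ μ g)
    (hW0 : ∀ z m0 g, 0 ≤ W z m0 g) (x : Fin T → X) (i : Fin (T+1)) (p : 𝕄 × (Fin N × S)) :
    0 ≤ numH pM A μ W b jstar x i p := by
  refine Finset.sum_nonneg fun m _ => ?_
  split
  · exact mul_nonneg (hpM0 m) (hatJointAt_nonneg A μ W b jstar hA0 hμ0 hW0 m x i p.2)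
  · exact le_refl 0

lemma hatZ_eq_sum_numH (x : Fin T → X) (i : Fin (T+1)) :
    hatZ pM A μ W b jstar x i = ∑ p : 𝕄 × (Fin N × S), numH pM A μ W b jstar x i p := by
  calc hatZ pM A μ W b jstar x i
      = ∑ m, ∑ g, pM m * hatJointAt A μ W b jstar m x i g :=
        Finset.sum_congr rfl fun m _ => Finset.mul_sum _ _ _
    _ = ∑ g, ∑ m, pM m * hatJointAt A μ W b jstar m x i g := Finset.sum_comm
    _ = ∑ g, ∑ m, ∑ m0 : 𝕄, (if m g.1 = m0 then pM m * hatJointAt A μ W b jstar m x i g else 0) :=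
        Finset.sum_congr rfl fun g _ => Finset.sum_congr rfl fun m _ => by
          rw [Finset.sum_ite_eq Finset.univ (m g.1)
            (fun _ => pM m * hatJointAt A μ W b jstar m x i g), if_pos (Finset.mem_univ _)]
    _ = ∑ g, ∑ m0 : 𝕄, ∑ m, (if m g.1 = m0 then pM m * hatJointAt A μ W b jstar m x i g else 0) :=
        Finset.sum_congr rfl fun g _ => Finset.sum_comm
    _ = ∑ m0 : 𝕄, ∑ g, ∑ m, (if m g.1 = m0 then pM m * hatJointAt A μ W b jstar m x i g else 0) :=
        Finset.sum_comm
    _ = ∑ p : 𝕄 × (Fin N × S), numH pM A μ W b jstar x i p :=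
        (Fintype.sum_prod_type (numH pM A μ W b jstar x i)).symm

lemma hatGtot_eq_sum (x : Fin T → X) (i : Fin (T+1))
    (hi : 0 < hatZ pM A μ W b jstar x i) :
    hatGtot pM A μ W b jstar x i
      = ∑ p : 𝕄 × (Fin N × S), (numH pM A μ W b jstar x i p / hatZ pM A μ W b jstar x i) • colW W p := by
  funext z
  unfold hatGtot hatGvec
  rw [if_pos hi, Finset.sum_apply]
  refine Finset.sum_congr rfl fun p _ => ?_
  rw [Pi.smul_apply, smul_eq_mul]
  unfold numH colW
  ring

lemma hatGtot_eq_zero (x : Fin T → X) (i : Fin (T+1))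
    (hi : ¬ 0 < hatZ pM A μ W b jstar x i) :
    hatGtot pM A μ W b jstar x i = (0 : X → ℝ) := by
  funext z
  unfold hatGtot
  rw [if_neg hi]
  rfl

lemma apply_hatGtot (L : (X → ℝ) →ₗ[ℝ] ℝ) (x : Fin T → X) (i : Fin (T+1))
    (hi : 0 < hatZ pM A μ W b jstar x i) :
    L (hatGtot pM A μ W b jstar x i)
      = ∑ p : 𝕄 × (Fin N × S),
          (numH pM A μ W b jstar x i p / hatZ pM A μ W b jstar x i) * L (colW W p) := by
  rw [hatGtot_eq_sum pM A μ W b jstar x i hi, map_sum]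
  simp only [_root_.map_smul, smul_eq_mul]

lemma eval_lin (L : (X → ℝ) →ₗ[ℝ] ℝ) (f : X → ℝ) :
    ∑ z, L (fun z' => if z' = z then (1:ℝ) else 0) * f z = L f := by
  classical
  have hf : f = ∑ z : X, f z • (fun z' => if z' = z then (1:ℝ) else 0) := by
    funext z'
    rw [Finset.sum_apply]
    simp only [Pi.smul_apply, smul_eq_mul, mul_ite, mul_one, mul_zero]
    rw [Finset.sum_ite_eq Finset.univ z' f, if_pos (Finset.mem_univ z')]
  conv_rhs => rw [hf]
  rw [map_sum]
  refine Finset.sum_congr rfl fun z _ => ?_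
  rw [LinearMap.map_smul, smul_eq_mul, mul_comm]

lemma mEvec_succ (x : Fin T → X) (j : Fin T) (p : 𝕄 × (Fin N × S)) :
    mEvec W b jstar x j.succ p = W (x j) p.1 p.2 := by
  unfold mEvec
  rw [dif_neg (by simp [Fin.val_succ])]
  congr 1

lemma mSeqPm_le_sum_mJointAt (hA0 : ∀ g g', 0 ≤ A g' g) (hμ0 : ∀ g, 0 ≤ μ g)
    (hW0 : ∀ z m0 g, 0 ≤ W z m0 g) (hW1 : ∀ m0 g, ∑ z, W z m0 g = 1)
    (m : Fin N → 𝕄) (x : Fin T → X) (i : Fin T) :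
    mSeqPm A μ W m x ≤ ∑ g, mJointAt A μ W m x i g := by
  rw [← mSeqPm_sumout A μ W m x i]
  refine Finset.sum_le_sum fun g _ => ?_
  refine mul_le_of_le_one_left (mJointAt_nonneg A μ W hA0 hμ0 hW0 m x i g) ?_
  calc W (x i) (m g.1) g ≤ ∑ z, W z (m g.1) g :=
        Finset.single_le_sum (fun z _ => hW0 z (m g.1) g) (Finset.mem_univ _)
    _ = 1 := hW1 _ _

lemma b_mul_promptV (m : Fin N → 𝕄) :
    b (m jstar) * promptV b jstar m = b (m jstar) := by
  unfold promptV
  split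
  · rw [mul_one]
  · next h => push_neg at h; rw [h, mul_zero]

lemma promptV_nonneg (m : Fin N → 𝕄) : 0 ≤ promptV b jstar m := by
  unfold promptV; split <;> norm_num

end Helpers4
/-!
STATEMENT 19 (Theorem 5 of the paper: multi-memory prompt tuning).

Memory-augmented HMM with `N` memory cells; downstream labels
`g(x) = 𝟙(bᵀ P(M_{j*} | X_{1:T} = x) ≥ 0)`.  Assume stationarity of `P(H_0)`
(ergodic chain, full support, `P(H_0) = A P(H_0)`) and the relaxed
multi-memory non-degeneracy condition with recoverable states
`H* = {j*} × S*`.  Let `R = {x : P(X_{1:T} = x) > 0 and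
∃ i ∈ [T], supp(P(H_i | X_{−i} = x_{−i})) ⊆ H*}`.  With the 0/1 prompt
`π_{(m_{1:N},j,s)} = 𝟙(m_{j*} ∈ supp(b))` (inducing `X̂` of length `T+1`),
there exist attention-head parameters `Θᴷ, q, β, Θⱽ, u` such that for all
`x ∈ R`:
`g(x) = 𝟙( (1/|I|) ∑_{i ∈ I} uᵀ ((Θⱽ Ĝ_i(x)) ⊙ ē_i(x)) ≥ 0 )`,
`I = argmax_{i ∈ [T+1]} { qᵀ (Θᴷ Ĝ_i(x) + β_i) }`.
-/
theorem stmt19 {𝕄 S X : Type*} {N : ℕ}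
    [Fintype 𝕄] [Fintype S] [Fintype X] [DecidableEq 𝕄] [DecidableEq S]
    (pM : (Fin N → 𝕄) → ℝ) (μ : Fin N × S → ℝ)
    (A : Matrix (Fin N × S) (Fin N × S) ℝ) (W : X → 𝕄 → Fin N × S → ℝ)
    (hpM0 : ∀ m, 0 ≤ pM m) (hpM1 : ∑ m, pM m = 1)
    (hμ0 : ∀ g, 0 ≤ μ g) (hμ1 : ∑ g, μ g = 1)
    (hA0 : ∀ g g', 0 ≤ A g' g) (hA1 : ∀ g, ∑ g', A g' g = 1)
    (hW0 : ∀ z m0 g, 0 ≤ W z m0 g) (hW1 : ∀ m0 g, ∑ z, W z m0 g = 1)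
    (b : 𝕄 → ℝ) (jstar : Fin N)
    -- relaxed multi-memory non-degeneracy with `𝕄* = supp(b)`, `H* = {j*} × S*`
    (Sstar : Finset S)
    (hli : LinearIndependent ℝ
      (fun p : {m0 : 𝕄 // b m0 ≠ 0} × {s : S // s ∈ Sstar} =>
        fun z : X => W z p.1.1 (jstar, p.2.1)))
    (hspan : Submodule.span ℝ
        {f : X → ℝ | ∃ m0 : 𝕄, ∃ s : S,
          b m0 ≠ 0 ∧ s ∈ Sstar ∧ f = fun z => W z m0 (jstar, s)}
      ⊓ Submodule.span ℝ
        {f : X → ℝ |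
          (∃ m0 : 𝕄, ∃ s : S,
            b m0 ≠ 0 ∧ s ∉ Sstar ∧ f = fun z => W z m0 (jstar, s))
          ∨ (∃ m0 : 𝕄, ∃ j : Fin N, ∃ s : S,
            j ≠ jstar ∧ f = fun z => W z m0 (j, s))}
      = ⊥)
    -- stationarity: ergodic chain, full support, `P(H_0) = A P(H_0)`
    (hErg : ∃ n₀ : ℕ, ∀ n ≥ n₀, ∀ g g' : Fin N × S, 0 < (A ^ n) g' g)
    (hfull : ∀ g, 0 < μ g)
    (hstat : A.mulVec μ = μ)
    (T : ℕ) :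
    ∃ (ΘK : Matrix (Option (Fin N × S)) X ℝ) (q : Option (Fin N × S) → ℝ)
      (β : Fin (T + 1) → Option (Fin N × S) → ℝ)
      (ΘV : Matrix (𝕄 × (Fin N × S)) X ℝ) (u : 𝕄 × (Fin N × S) → ℝ),
      ∀ x : Fin T → X,
        -- `x ∈ R`
        0 < mSeqP pM A μ W x →
        (∃ i : Fin T, ∀ g : Fin N × S,
          ¬(g.1 = jstar ∧ g.2 ∈ Sstar) → mPostH pM A μ W x i g = 0) →
        (0 ≤ ∑ m0, b m0 * mMemPost pM A μ W jstar x m0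
          ↔ 0 ≤
            ((Finset.univ.filter fun i : Fin (T + 1) => ∀ i' : Fin (T + 1),
                q ⬝ᵥ (ΘK.mulVec (hatGtot pM A μ W b jstar x i') + β i')
                  ≤ q ⬝ᵥ (ΘK.mulVec (hatGtot pM A μ W b jstar x i) + β i)).card : ℝ)⁻¹ *
              ∑ i ∈ Finset.univ.filter (fun i : Fin (T + 1) => ∀ i' : Fin (T + 1),
                  q ⬝ᵥ (ΘK.mulVec (hatGtot pM A μ W b jstar x i') + β i')
                    ≤ q ⬝ᵥ (ΘK.mulVec (hatGtot pM A μ W b jstar x i) + β i)),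
                ∑ p : 𝕄 × (Fin N × S), u p *
                  ((ΘV.mulVec (hatGtot pM A μ W b jstar x i)) p *
                    mEvec W b jstar x i p)) := by
  classical
  obtain ⟨ψ, hψ0, hψδ, hψbad⟩ := exists_dual W b jstar Sstar hli hspan
  have hμ0 : ∀ g, 0 ≤ μ g := fun g => (hfull g).le
  set φL : (X → ℝ) →ₗ[ℝ] ℝ := ∑ p : 𝕄 × (Fin N × S), ψ p with hφL
  have hφapp : ∀ f, φL f = ∑ p : 𝕄 × (Fin N × S), ψ p f := by
    intro f; rw [hφL, LinearMap.sum_apply]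
  have hφ1 : ∀ p, GoodP b jstar Sstar p → φL (colW W p) = 1 := by
    intro p hp
    rw [hφapp, Finset.sum_eq_single p]
    · rw [hψδ p p hp hp, if_pos rfl]
    · intro p' _ hne
      by_cases h' : GoodP b jstar Sstar p'
      · rw [hψδ p' p h' hp, if_neg (Ne.symm hne)]
      · rw [hψ0 p' h']; rfl
    · intro h; exact absurd (Finset.mem_univ p) h
  have hmembad : ∀ p', ¬ GoodP b jstar Sstar p' → ¬(p'.2.1 = jstar ∧ b p'.1 = 0) →
      colW W p' ∈ ({f : X → ℝ |
        (∃ m0 : 𝕄, ∃ s : S, b m0 ≠ 0 ∧ s ∉ Sstar ∧ f = fun z => W z m0 (jstar, s))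
        ∨ (∃ m0 : 𝕄, ∃ j : Fin N, ∃ s : S, j ≠ jstar ∧ f = fun z => W z m0 (j, s))} : Set (X → ℝ)) := by
    intro p' hng hnn
    by_cases h1 : p'.2.1 = jstar
    · have hb : b p'.1 ≠ 0 := fun h => hnn ⟨h1, h⟩
      have hs : p'.2.2 ∉ Sstar := fun hs => hng ⟨hb, h1, hs⟩
      left
      exact ⟨p'.1, p'.2.2, hb, hs, by
        funext z; exact congrArg (W z p'.1) (Prod.ext h1 rfl)⟩
    · right
      exact ⟨p'.1, p'.2.1, p'.2.2, h1, by
        funext z; exact congrArg (W z p'.1) (Prod.mk.eta (p := p'.2)).symm⟩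
  have hφbadf : ∀ p', ¬ GoodP b jstar Sstar p' → ¬(p'.2.1 = jstar ∧ b p'.1 = 0) →
      φL (colW W p') = 0 := by
    intro p' hng hnn
    rw [hφapp]
    refine Finset.sum_eq_zero fun p _ => ?_
    by_cases h' : GoodP b jstar Sstar p
    · exact hψbad p (colW W p') h' (hmembad p' hng hnn)
    · rw [hψ0 p h']; rfl
  set Cb : ℝ := ∑ p : 𝕄 × (Fin N × S), |φL (colW W p)| with hCb
  have hCb0 : 0 ≤ Cb := Finset.sum_nonneg fun p _ => abs_nonneg _
  refine ⟨(fun o z => if o = none then φL (fun z' => if z' = z then (1:ℝ) else 0) else 0),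
    (fun o => if o = none then 1 else 0),
    (fun i o => if o = none then (if i = 0 then -(Cb+2) else 0) else 0),
    (fun p z => ψ p (fun z' => if z' = z then (1:ℝ) else 0)),
    (fun p => if GoodP b jstar Sstar p then b p.1 else 0), ?_⟩
  intro x hx1 hx2
  obtain ⟨i1, hi1⟩ := hx2
  -- dot-product / score simplification
  have hdotnone : ∀ v : Option (Fin N × S) → ℝ,
      (fun o : Option (Fin N × S) => if o = none then (1:ℝ) else 0) ⬝ᵥ v = v none := by
    intro v
    simp only [dotProduct, ite_mul, one_mul, zero_mul]
    rw [Finset.sum_ite_eq' Finset.univ (none : Option (Fin N × S)) v,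
      if_pos (Finset.mem_univ _)]
  have hKnone : ∀ f : X → ℝ,
      ((fun o (z : X) => if o = none then φL (fun z' => if z' = z then (1:ℝ) else 0) else 0) *ᵥ f)
        (none : Option (Fin N × S)) = φL f := by
    intro f
    show (∑ z, (if (none : Option (Fin N × S)) = none
        then φL (fun z' => if z' = z then (1:ℝ) else 0) else 0) * f z) = φL f
    simp only [if_pos rfl]
    exact eval_lin φL f
  have hscore : ∀ i : Fin (T+1),
      (fun o : Option (Fin N × S) => if o = none then (1:ℝ) else 0) ⬝ᵥ
        ((fun o (z : X) => if o = none then φL (fun z' => if z' = z then (1:ℝ) else 0) else 0) *ᵥ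
            hatGtot pM A μ W b jstar x i +
          (fun (i : Fin (T+1)) (o : Option (Fin N × S)) =>
            if o = none then (if i = 0 then -(Cb+2) else 0) else 0) i)
      = φL (hatGtot pM A μ W b jstar x i) + (if i = 0 then -(Cb+2) else 0) := by
    intro i
    rw [hdotnone, Pi.add_apply, hKnone]
    norm_num
  simp only [hscore]
  set I : Finset (Fin (T+1)) := Finset.filter (fun i : Fin (T+1) =>
    ∀ i' : Fin (T+1),
      φL (hatGtot pM A μ W b jstar x i') + (if i' = 0 then -(Cb+2) else 0)
        ≤ φL (hatGtot pM A μ W b jstar x i) + (if i = 0 then -(Cb+2) else 0)) Finset.univ with hI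
  -- basic nonnegativity
  have hnumnn : ∀ (i : Fin (T+1)) p, 0 ≤ numH pM A μ W b jstar x i p :=
    fun i p => numH_nonneg pM A μ W b jstar hpM0 hA0 hμ0 hW0 x i p
  have hZnn : ∀ i : Fin (T+1), 0 ≤ hatZ pM A μ W b jstar x i := by
    intro i
    rw [hatZ_eq_sum_numH]
    exact Finset.sum_nonneg fun p _ => hnumnn i p
  have hsumdiv : ∀ i : Fin (T+1), 0 < hatZ pM A μ W b jstar x i →
      ∑ p : 𝕄 × (Fin N × S), numH pM A μ W b jstar x i p / hatZ pM A μ W b jstar x i = 1 := by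
    intro i hz
    rw [← Finset.sum_div, ← hatZ_eq_sum_numH, div_self hz.ne']
  -- unreachable components vanish for positions ≥ 1
  have hunreach : ∀ (j : Fin T) p, p.2.1 = jstar → b p.1 = 0 →
      numH pM A μ W b jstar x j.succ p = 0 := by
    intro j p h1 h2
    refine Finset.sum_eq_zero fun m _ => ?_
    by_cases hc : m p.2.1 = p.1
    · rw [if_pos hc, hatJointAt_succ A μ W b jstar hstat m x j p.2]
      have hb0 : b (m jstar) = 0 := by rw [← h1, hc, h2]
      have hπ : promptV b jstar m = 0 := by
        unfold promptV
        rw [if_neg (not_not.mpr hb0)]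
      rw [hπ, zero_mul, mul_zero]
    · rw [if_neg hc]
  -- recovery of the posterior from the model output
  have hΘV : ∀ (f : X → ℝ) (p : 𝕄 × (Fin N × S)),
      ((fun (p : 𝕄 × (Fin N × S)) (z : X) => ψ p (fun z' => if z' = z then (1:ℝ) else 0)) *ᵥ f) p
        = ψ p f := by
    intro f p
    show (∑ z, ψ p (fun z' => if z' = z then (1:ℝ) else 0) * f z) = ψ p f
    exact eval_lin (ψ p) f
  have hrecover : ∀ (j : Fin T) p, GoodP b jstar Sstar p →
      0 < hatZ pM A μ W b jstar x j.succ →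
      ψ p (hatGtot pM A μ W b jstar x j.succ)
        = numH pM A μ W b jstar x j.succ p / hatZ pM A μ W b jstar x j.succ := by
    intro j p hp hz
    rw [apply_hatGtot pM A μ W b jstar (ψ p) x j.succ hz, Finset.sum_eq_single p]
    · rw [hψδ p p hp hp, if_pos rfl, mul_one]
    · intro p' _ hne
      by_cases h' : GoodP b jstar Sstar p'
      · rw [hψδ p p' hp h', if_neg hne, mul_zero]
      · by_cases h2 : p'.2.1 = jstar ∧ b p'.1 = 0
        · rw [hunreach j p' h2.1 h2.2, zero_div, zero_mul]
        · rw [hψbad p (colW W p') hp (hmembad p' h' h2), mul_zero]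
    · intro h; exact absurd (Finset.mem_univ p) h
  -- value simplification at positions ≥ 1
  have hval : ∀ (i : Fin (T+1)) (j : Fin T), i = j.succ →
      0 < hatZ pM A μ W b jstar x i →
      (∑ p : 𝕄 × (Fin N × S),
        (fun p : 𝕄 × (Fin N × S) => if GoodP b jstar Sstar p then b p.1 else 0) p *
          (((fun (p : 𝕄 × (Fin N × S)) (z : X) =>
              ψ p (fun z' => if z' = z then (1:ℝ) else 0)) *ᵥ
                hatGtot pM A μ W b jstar x i) p *
            mEvec W b jstar x i p))
      = (∑ p ∈ Finset.univ.filter (GoodP b jstar Sstar),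
          b p.1 * (numH pM A μ W b jstar x i p * W (x j) p.1 p.2))
          / hatZ pM A μ W b jstar x i := by
    rintro i j rfl hz
    calc (∑ p : 𝕄 × (Fin N × S),
        (fun p : 𝕄 × (Fin N × S) => if GoodP b jstar Sstar p then b p.1 else 0) p *
          (((fun (p : 𝕄 × (Fin N × S)) (z : X) =>
              ψ p (fun z' => if z' = z then (1:ℝ) else 0)) *ᵥ
                hatGtot pM A μ W b jstar x j.succ) p *
            mEvec W b jstar x j.succ p))
        = ∑ p : 𝕄 × (Fin N × S), (if GoodP b jstar Sstar p
            then b p.1 * ((numH pM A μ W b jstar x j.succ p / hatZ pM A μ W b jstar x j.succ)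
              * W (x j) p.1 p.2) else 0) := by
          refine Finset.sum_congr rfl fun p _ => ?_
          rw [hΘV (hatGtot pM A μ W b jstar x j.succ) p, mEvec_succ W b jstar x j p]
          dsimp only
          by_cases h : GoodP b jstar Sstar p
          · rw [if_pos h, if_pos h, hrecover j p h hz]
          · rw [if_neg h, if_neg h, zero_mul]
      _ = ∑ p ∈ Finset.univ.filter (GoodP b jstar Sstar),
            b p.1 * ((numH pM A μ W b jstar x j.succ p / hatZ pM A μ W b jstar x j.succ)
              * W (x j) p.1 p.2) := (Finset.sum_filter _ _).symm
      _ = (∑ p ∈ Finset.univ.filter (GoodP b jstar Sstar),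
            b p.1 * (numH pM A μ W b jstar x j.succ p * W (x j) p.1 p.2))
            / hatZ pM A μ W b jstar x j.succ := by
          rw [Finset.sum_div]
          exact Finset.sum_congr rfl fun p _ => by ring
  -- score bound at position 0
  have hφ0_le : φL (hatGtot pM A μ W b jstar x 0) ≤ Cb := by
    by_cases hz : 0 < hatZ pM A μ W b jstar x 0
    · rw [apply_hatGtot pM A μ W b jstar φL x 0 hz, hCb]
      refine Finset.sum_le_sum fun p _ => ?_
      have ht0 : 0 ≤ numH pM A μ W b jstar x 0 p / hatZ pM A μ W b jstar x 0 :=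
        div_nonneg (hnumnn 0 p) (hZnn 0)
      have ht1 : numH pM A μ W b jstar x 0 p / hatZ pM A μ W b jstar x 0 ≤ 1 := by
        refine div_le_one_of_le₀ ?_ (hZnn 0)
        rw [hatZ_eq_sum_numH]
        exact Finset.single_le_sum (fun p' _ => hnumnn 0 p') (Finset.mem_univ p)
      calc (numH pM A μ W b jstar x 0 p / hatZ pM A μ W b jstar x 0) * φL (colW W p)
          ≤ (numH pM A μ W b jstar x 0 p / hatZ pM A μ W b jstar x 0) * |φL (colW W p)| :=
            mul_le_mul_of_nonneg_left (le_abs_self _) ht0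
        _ ≤ 1 * |φL (colW W p)| := mul_le_mul_of_nonneg_right ht1 (abs_nonneg _)
        _ = |φL (colW W p)| := one_mul _
    · rw [hatGtot_eq_zero pM A μ W b jstar x 0 hz, map_zero]; exact hCb0
  have hsc0 : φL (hatGtot pM A μ W b jstar x 0)
      + (if (0 : Fin (T+1)) = 0 then -(Cb+2) else 0) ≤ -2 := by
    rw [if_pos rfl]; linarith
  have hβsucc : ∀ j : Fin T, (if (j.succ : Fin (T+1)) = 0 then -(Cb+2) else 0) = (0:ℝ) :=
    fun j => if_neg (Fin.succ_ne_zero j)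
  -- per-term bound
  have hterm : ∀ (j : Fin T) p, 0 < hatZ pM A μ W b jstar x j.succ →
      (numH pM A μ W b jstar x j.succ p / hatZ pM A μ W b jstar x j.succ) * φL (colW W p)
        ≤ numH pM A μ W b jstar x j.succ p / hatZ pM A μ W b jstar x j.succ := by
    intro j p hz
    by_cases h : GoodP b jstar Sstar p
    · rw [hφ1 p h, mul_one]
    · by_cases h2 : p.2.1 = jstar ∧ b p.1 = 0
      · rw [hunreach j p h2.1 h2.2]; simp
      · rw [hφbadf p h h2, mul_zero]
        exact div_nonneg (hnumnn _ p) (hZnn _)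
  have hsuccle : ∀ j : Fin T, φL (hatGtot pM A μ W b jstar x j.succ) ≤ 1 := by
    intro j
    by_cases hz : 0 < hatZ pM A μ W b jstar x j.succ
    · rw [apply_hatGtot pM A μ W b jstar φL x j.succ hz]
      exact le_trans (Finset.sum_le_sum fun p _ => hterm j p hz) (le_of_eq (hsumdiv j.succ hz))
    · rw [hatGtot_eq_zero pM A μ W b jstar x j.succ hz, map_zero]; norm_num
  -- LHS identity
  have hLHSeq : (∑ m0, b m0 * mMemPost pM A μ W jstar x m0)
      = (∑ m, pM m * (b (m jstar) * mSeqPm A μ W m x)) / mSeqP pM A μ W x := by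
    unfold mMemPost
    calc ∑ m0, b m0 * ((∑ m, if m jstar = m0 then pM m * mSeqPm A μ W m x else 0)
          / mSeqP pM A μ W x)
        = (∑ m0 : 𝕄, ∑ m, if m jstar = m0 then b m0 * (pM m * mSeqPm A μ W m x) else 0)
            / mSeqP pM A μ W x := by
          rw [Finset.sum_div]
          refine Finset.sum_congr rfl fun m0 _ => ?_
          rw [← mul_div_assoc]
          congr 1
          rw [Finset.mul_sum]
          refine Finset.sum_congr rfl fun m _ => ?_
          rw [mul_ite, mul_zero]
      _ = (∑ m, pM m * (b (m jstar) * mSeqPm A μ W m x)) / mSeqP pM A μ W x := by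
          congr 1
          rw [Finset.sum_comm]
          refine Finset.sum_congr rfl fun m _ => ?_
          rw [Finset.sum_ite_eq Finset.univ (m jstar)
            (fun m0 => b m0 * (pM m * mSeqPm A μ W m x)), if_pos (Finset.mem_univ _)]
          ring
  have hdiviff : ∀ (E c : ℝ), 0 < c → (0 ≤ E / c ↔ 0 ≤ E) := by
    intro E c hc
    constructor
    · intro h
      have h2 := mul_nonneg h hc.le
      rwa [div_mul_cancel₀ E hc.ne'] at h2
    · intro h; exact div_nonneg h hc.le
  have hhJnn : ∀ (m : Fin N → 𝕄) (i : Fin (T+1)) g, 0 ≤ hatJointAt A μ W b jstar m x i g :=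
    fun m i g => hatJointAt_nonneg A μ W b jstar hA0 hμ0 hW0 m x i g
  -- the key double-sum identity
  have hDkey : ∀ (j : Fin T),
      (∀ p, ¬ GoodP b jstar Sstar p → numH pM A μ W b jstar x j.succ p = 0) →
      (∑ p ∈ Finset.univ.filter (GoodP b jstar Sstar),
          b p.1 * (numH pM A μ W b jstar x j.succ p * W (x j) p.1 p.2))
        = ∑ m, pM m * (b (m jstar) * mSeqPm A μ W m x) := by
    intro j hnum0
    have h1 : ∀ p : 𝕄 × (Fin N × S),
        (if GoodP b jstar Sstar p then
            b p.1 * (numH pM A μ W b jstar x j.succ p * W (x j) p.1 p.2) else 0)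
          = ∑ m, (if GoodP b jstar Sstar p then
              (if m p.2.1 = p.1 then
                b p.1 * (pM m * (hatJointAt A μ W b jstar m x j.succ p.2 * W (x j) p.1 p.2))
              else 0) else 0) := by
      intro p
      by_cases hG : GoodP b jstar Sstar p
      · simp only [if_pos hG]
        unfold numH
        rw [Finset.sum_mul, Finset.mul_sum]
        refine Finset.sum_congr rfl fun m _ => ?_
        by_cases hc : m p.2.1 = p.1
        · rw [if_pos hc, if_pos hc]; ring
        · rw [if_neg hc, if_neg hc]; ring
      · simp only [if_neg hG, Finset.sum_const_zero]
    have h2 : ∀ (m : Fin N → 𝕄) (g : Fin N × S),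
        (∑ m0 : 𝕄, (if GoodP b jstar Sstar (m0, g) then
            (if m g.1 = m0 then
              b m0 * (pM m * (hatJointAt A μ W b jstar m x j.succ g * W (x j) m0 g))
            else 0) else 0))
          = (if GoodP b jstar Sstar (m g.1, g) then
              b (m g.1) * (pM m * (hatJointAt A μ W b jstar m x j.succ g * W (x j) (m g.1) g))
            else 0) := by
      intro m g
      rw [Finset.sum_eq_single (m g.1)]
      · by_cases hG : GoodP b jstar Sstar (m g.1, g)
        · rw [if_pos hG, if_pos hG, if_pos rfl]
        · rw [if_neg hG, if_neg hG]
      · intro m0 _ hm0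
        by_cases hG : GoodP b jstar Sstar (m0, g)
        · rw [if_pos hG, if_neg (Ne.symm hm0)]
        · rw [if_neg hG]
      · intro h; exact absurd (Finset.mem_univ _) h
    calc (∑ p ∈ Finset.univ.filter (GoodP b jstar Sstar),
          b p.1 * (numH pM A μ W b jstar x j.succ p * W (x j) p.1 p.2))
        = ∑ p : 𝕄 × (Fin N × S), (if GoodP b jstar Sstar p then
            b p.1 * (numH pM A μ W b jstar x j.succ p * W (x j) p.1 p.2) else 0) :=
          Finset.sum_filter _ _
      _ = ∑ p : 𝕄 × (Fin N × S), ∑ m, (if GoodP b jstar Sstar p then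
            (if m p.2.1 = p.1 then
              b p.1 * (pM m * (hatJointAt A μ W b jstar m x j.succ p.2 * W (x j) p.1 p.2))
            else 0) else 0) := Finset.sum_congr rfl fun p _ => h1 p
      _ = ∑ m, ∑ p : 𝕄 × (Fin N × S), (if GoodP b jstar Sstar p then
            (if m p.2.1 = p.1 then
              b p.1 * (pM m * (hatJointAt A μ W b jstar m x j.succ p.2 * W (x j) p.1 p.2))
            else 0) else 0) := Finset.sum_comm
      _ = ∑ m, ∑ m0 : 𝕄, ∑ g : Fin N × S, (if GoodP b jstar Sstar (m0, g) then
            (if m g.1 = m0 then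
              b m0 * (pM m * (hatJointAt A μ W b jstar m x j.succ g * W (x j) m0 g))
            else 0) else 0) := Finset.sum_congr rfl fun m _ =>
              Fintype.sum_prod_type (fun p : 𝕄 × (Fin N × S) => (if GoodP b jstar Sstar p then
                (if m p.2.1 = p.1 then
                  b p.1 * (pM m * (hatJointAt A μ W b jstar m x j.succ p.2 * W (x j) p.1 p.2))
                else 0) else 0))
      _ = ∑ m, ∑ g : Fin N × S, ∑ m0 : 𝕄, (if GoodP b jstar Sstar (m0, g) then
            (if m g.1 = m0 then
              b m0 * (pM m * (hatJointAt A μ W b jstar m x j.succ g * W (x j) m0 g))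
            else 0) else 0) := Finset.sum_congr rfl fun m _ => Finset.sum_comm
      _ = ∑ m, ∑ g : Fin N × S, (if GoodP b jstar Sstar (m g.1, g) then
            b (m g.1) * (pM m * (hatJointAt A μ W b jstar m x j.succ g * W (x j) (m g.1) g))
          else 0) := Finset.sum_congr rfl fun m _ => Finset.sum_congr rfl fun g _ => h2 m g
      _ = ∑ m, pM m * (b (m jstar) * mSeqPm A μ W m x) := by
          refine Finset.sum_congr rfl fun m _ => ?_
          have hR : pM m * (b (m jstar) * mSeqPm A μ W m x)
              = ∑ g, b (m jstar) * (pM m * (hatEm W b jstar m x j.succ g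
                  * hatJointAt A μ W b jstar m x j.succ g)) := by
            calc pM m * (b (m jstar) * mSeqPm A μ W m x)
                = (b (m jstar) * promptV b jstar m) * (pM m * mSeqPm A μ W m x) := by
                  rw [b_mul_promptV b jstar]; ring
              _ = b (m jstar) * (pM m * (promptV b jstar m * mSeqPm A μ W m x)) := by ring
              _ = b (m jstar) * (pM m * hatSeqPm A μ W b jstar m x) := by
                  rw [hatSeqPm_eq A μ W b jstar hstat m x]
              _ = b (m jstar) * (pM m * ∑ g, hatEm W b jstar m x j.succ g
                    * hatJointAt A μ W b jstar m x j.succ g) := by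
                  rw [hatSeqPm_sumout A μ W b jstar m x j.succ]
              _ = ∑ g, b (m jstar) * (pM m * (hatEm W b jstar m x j.succ g
                    * hatJointAt A μ W b jstar m x j.succ g)) := by
                  rw [Finset.mul_sum, Finset.mul_sum]
          rw [hR]
          refine Finset.sum_congr rfl fun g _ => ?_
          simp only [hatEm_succ W b jstar m x j]
          by_cases hG : GoodP b jstar Sstar (m g.1, g)
          · rw [if_pos hG]
            have hj : m g.1 = m jstar := congrArg m hG.2.1
            rw [hj]
            ring
          · rw [if_neg hG]
            by_cases hb : b (m jstar) = 0
            · rw [hb]; ring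
            · have h0 : numH pM A μ W b jstar x j.succ (m g.1, g) = 0 := hnum0 _ hG
              have hterm0 : pM m * hatJointAt A μ W b jstar m x j.succ g = 0 := by
                have h3 := (Finset.sum_eq_zero_iff_of_nonneg (fun m' _ => by
                  dsimp only
                  split
                  · exact mul_nonneg (hpM0 m') (hhJnn m' j.succ g)
                  · exact le_refl 0)).mp h0 m (Finset.mem_univ m)
                rwa [if_pos rfl] at h3
              have hrw : b (m jstar) * (pM m * (W (x j) (m g.1) g
                    * hatJointAt A μ W b jstar m x j.succ g))
                  = b (m jstar) * (W (x j) (m g.1) g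
                    * (pM m * hatJointAt A μ W b jstar m x j.succ g)) := by ring
              rw [hrw, hterm0, mul_zero, mul_zero]
  by_cases hZstar : 0 < hatZ pM A μ W b jstar x i1.succ
  · -- Case A
    have hmZpos : 0 < mZ pM A μ W x i1 := by
      have h1 : mSeqP pM A μ W x ≤ mZ pM A μ W x i1 := by
        unfold mSeqP mZ
        exact Finset.sum_le_sum fun m _ => mul_le_mul_of_nonneg_left
          (mSeqPm_le_sum_mJointAt A μ W hA0 hμ0 hW0 hW1 m x i1) (hpM0 m)
      exact lt_of_lt_of_le hx1 h1
    have hnumA : ∀ p, ¬ GoodP b jstar Sstar p → numH pM A μ W b jstar x i1.succ p = 0 := by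
      intro p hp
      by_cases hH : p.2.1 = jstar ∧ p.2.2 ∈ Sstar
      · have hb : b p.1 = 0 := by
          by_contra hb
          exact hp ⟨hb, hH.1, hH.2⟩
        exact hunreach i1 p hH.1 hb
      · have h0 : mPostH pM A μ W x i1 p.2 = 0 := hi1 p.2 hH
        unfold mPostH at h0
        have hnum2 : ∑ m', pM m' * mJointAt A μ W m' x i1 p.2 = 0 := by
          rcases div_eq_zero_iff.mp h0 with h|h
          · exact h
          · exact absurd h hmZpos.ne'
        have hterm2 := (Finset.sum_eq_zero_iff_of_nonneg (fun m' _ =>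
          mul_nonneg (hpM0 m') (mJointAt_nonneg A μ W hA0 hμ0 hW0 m' x i1 p.2))).mp hnum2
        refine Finset.sum_eq_zero fun m _ => ?_
        by_cases hc : m p.2.1 = p.1
        · rw [if_pos hc, hatJointAt_succ A μ W b jstar hstat m x i1 p.2]
          have h5 := hterm2 m (Finset.mem_univ m)
          calc pM m * (promptV b jstar m * mJointAt A μ W m x i1 p.2)
              = promptV b jstar m * (pM m * mJointAt A μ W m x i1 p.2) := by ring
            _ = 0 := by rw [h5, mul_zero]
        · rw [if_neg hc]
    have hfstar : φL (hatGtot pM A μ W b jstar x i1.succ) = 1 := by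
      rw [apply_hatGtot pM A μ W b jstar φL x i1.succ hZstar, ← hsumdiv i1.succ hZstar]
      refine Finset.sum_congr rfl fun p _ => ?_
      by_cases h : GoodP b jstar Sstar p
      · rw [hφ1 p h, mul_one]
      · rw [hnumA p h, zero_div, zero_mul]
    have hstarmem : i1.succ ∈ I := by
      rw [hI, Finset.mem_filter]
      refine ⟨Finset.mem_univ _, fun i' => ?_⟩
      rw [hβsucc i1, hfstar]
      rcases Fin.eq_zero_or_eq_succ i' with rfl|⟨j, rfl⟩
      · linarith [hsc0]
      · rw [hβsucc j]; linarith [hsuccle j]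
    have hImem : ∀ i ∈ I, ∃ j : Fin T, i = j.succ ∧ 0 < hatZ pM A μ W b jstar x i ∧
        (∀ p, ¬ GoodP b jstar Sstar p → numH pM A μ W b jstar x i p = 0) := by
      intro i hi
      rw [hI, Finset.mem_filter] at hi
      have hmax := hi.2
      have h1 : (1:ℝ) ≤ φL (hatGtot pM A μ W b jstar x i) + (if i = 0 then -(Cb+2) else 0) := by
        have h6 := hmax i1.succ
        rw [hβsucc i1, hfstar] at h6
        linarith
      rcases Fin.eq_zero_or_eq_succ i with rfl|⟨j, rfl⟩
      · exfalso; linarith [hsc0]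
      · rw [hβsucc j] at h1
        have hz : 0 < hatZ pM A μ W b jstar x j.succ := by
          by_contra hz
          rw [hatGtot_eq_zero pM A μ W b jstar x j.succ hz, map_zero] at h1
          linarith
        refine ⟨j, rfl, hz, ?_⟩
        have hφeq : (∑ p : 𝕄 × (Fin N × S),
            (numH pM A μ W b jstar x j.succ p / hatZ pM A μ W b jstar x j.succ)
              * φL (colW W p))
            = ∑ p : 𝕄 × (Fin N × S),
              numH pM A μ W b jstar x j.succ p / hatZ pM A μ W b jstar x j.succ := by
          refine le_antisymm (Finset.sum_le_sum fun p _ => hterm j p hz) ?_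
          rw [hsumdiv j.succ hz, ← apply_hatGtot pM A μ W b jstar φL x j.succ hz]
          linarith
        have hper := (Finset.sum_eq_sum_iff_of_le fun p _ => hterm j p hz).mp hφeq
        intro p hp
        have heq := hper p (Finset.mem_univ p)
        by_cases h2 : p.2.1 = jstar ∧ b p.1 = 0
        · exact hunreach j p h2.1 h2.2
        · rw [hφbadf p hp h2, mul_zero] at heq
          rcases div_eq_zero_iff.mp heq.symm with h|h
          · exact h
          · exact absurd h hz.ne'
    have hvalI : ∀ i ∈ I,
        (∑ p : 𝕄 × (Fin N × S),
          (fun p : 𝕄 × (Fin N × S) => if GoodP b jstar Sstar p then b p.1 else 0) p *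
            (((fun (p : 𝕄 × (Fin N × S)) (z : X) =>
                ψ p (fun z' => if z' = z then (1:ℝ) else 0)) *ᵥ
                  hatGtot pM A μ W b jstar x i) p *
              mEvec W b jstar x i p))
        = (∑ m, pM m * (b (m jstar) * mSeqPm A μ W m x)) / hatZ pM A μ W b jstar x i := by
      intro i hi
      obtain ⟨j, rfl, hz, hn0⟩ := hImem i hi
      rw [hval j.succ j rfl hz, hDkey j hn0]
    have hsumI : (∑ i ∈ I, ∑ p : 𝕄 × (Fin N × S),
          (fun p : 𝕄 × (Fin N × S) => if GoodP b jstar Sstar p then b p.1 else 0) p *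
            (((fun (p : 𝕄 × (Fin N × S)) (z : X) =>
                ψ p (fun z' => if z' = z then (1:ℝ) else 0)) *ᵥ
                  hatGtot pM A μ W b jstar x i) p *
              mEvec W b jstar x i p))
        = ∑ i ∈ I, (∑ m, pM m * (b (m jstar) * mSeqPm A μ W m x)) / hatZ pM A μ W b jstar x i :=
      Finset.sum_congr rfl hvalI
    have hcardpos : 0 < I.card := Finset.card_pos.mpr ⟨i1.succ, hstarmem⟩
    have hinv : (0:ℝ) < ((I.card : ℝ))⁻¹ := inv_pos.mpr (by exact_mod_cast hcardpos)
    have hcsum : 0 < ∑ i ∈ I, (hatZ pM A μ W b jstar x i)⁻¹ := by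
      refine Finset.sum_pos (fun i hi => ?_) ⟨i1.succ, hstarmem⟩
      obtain ⟨j, rfl, hz, _⟩ := hImem i hi
      exact inv_pos.mpr hz
    have hsumD : (∑ i ∈ I, (∑ m, pM m * (b (m jstar) * mSeqPm A μ W m x))
          / hatZ pM A μ W b jstar x i)
        = (∑ m, pM m * (b (m jstar) * mSeqPm A μ W m x))
          * ∑ i ∈ I, (hatZ pM A μ W b jstar x i)⁻¹ := by
      rw [Finset.mul_sum]
      exact Finset.sum_congr rfl fun i _ => div_eq_mul_inv _ _
    rw [hLHSeq, hsumI, hsumD, hdiviff _ _ hx1]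
    constructor
    · intro hD
      exact mul_nonneg hinv.le (mul_nonneg hD hcsum.le)
    · intro h
      have h2 : ((I.card:ℝ))⁻¹ * ((∑ m, pM m * (b (m jstar) * mSeqPm A μ W m x))
            * ∑ i ∈ I, (hatZ pM A μ W b jstar x i)⁻¹)
          = (∑ m, pM m * (b (m jstar) * mSeqPm A μ W m x))
            * (((I.card:ℝ))⁻¹ * ∑ i ∈ I, (hatZ pM A μ W b jstar x i)⁻¹) := by ring
      rw [h2] at h
      exact (mul_nonneg_iff_of_pos_right (mul_pos hinv hcsum)).mp h
  · -- Case B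
    have hZeq0 : hatZ pM A μ W b jstar x i1.succ = 0 := le_antisymm (not_lt.mp hZstar) (hZnn _)
    have hall : ∀ (m : Fin N → 𝕄) g, pM m * hatJointAt A μ W b jstar m x i1.succ g = 0 := by
      unfold hatZ at hZeq0
      have h2 := (Finset.sum_eq_zero_iff_of_nonneg (fun m _ =>
        mul_nonneg (hpM0 m) (Finset.sum_nonneg fun g _ => hhJnn m i1.succ g))).mp hZeq0
      intro m g
      have h3 := h2 m (Finset.mem_univ m)
      rcases mul_eq_zero.mp h3 with h|h
      · rw [h, zero_mul]
      · have h4 := (Finset.sum_eq_zero_iff_of_nonneg (fun g _ =>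
          hhJnn m i1.succ g)).mp h g (Finset.mem_univ g)
        rw [h4, mul_zero]
    have hBseq : ∀ m, pM m * hatSeqPm A μ W b jstar m x = 0 := by
      intro m
      rw [← hatSeqPm_sumout A μ W b jstar m x i1.succ, Finset.mul_sum]
      refine Finset.sum_eq_zero fun g _ => ?_
      calc pM m * (hatEm W b jstar m x i1.succ g * hatJointAt A μ W b jstar m x i1.succ g)
          = hatEm W b jstar m x i1.succ g * (pM m * hatJointAt A μ W b jstar m x i1.succ g) := by
            ring
        _ = 0 := by rw [hall m g, mul_zero]
    have hBem : ∀ (i : Fin (T+1)) (m : Fin N → 𝕄) g,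
        pM m * (hatEm W b jstar m x i g * hatJointAt A μ W b jstar m x i g) = 0 := by
      intro i m g
      have h1 : ∑ g, pM m * (hatEm W b jstar m x i g * hatJointAt A μ W b jstar m x i g) = 0 := by
        rw [← Finset.mul_sum, hatSeqPm_sumout A μ W b jstar m x i]
        exact hBseq m
      exact (Finset.sum_eq_zero_iff_of_nonneg (fun g _ => mul_nonneg (hpM0 m)
        (mul_nonneg (hatEm_nonneg W b jstar hW0 m x i g) (hhJnn m i g)))).mp h1 g
        (Finset.mem_univ g)
    have hBD : (∑ m, pM m * (b (m jstar) * mSeqPm A μ W m x)) = 0 := by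
      refine Finset.sum_eq_zero fun m _ => ?_
      have h1 : pM m * (promptV b jstar m * mSeqPm A μ W m x) = 0 := by
        rw [← hatSeqPm_eq A μ W b jstar hstat m x]; exact hBseq m
      calc pM m * (b (m jstar) * mSeqPm A μ W m x)
          = pM m * ((b (m jstar) * promptV b jstar m) * mSeqPm A μ W m x) := by
            rw [b_mul_promptV]
        _ = b (m jstar) * (pM m * (promptV b jstar m * mSeqPm A μ W m x)) := by ring
        _ = 0 := by rw [h1, mul_zero]
    have hfstar0 : φL (hatGtot pM A μ W b jstar x i1.succ) = 0 := by
      rw [hatGtot_eq_zero pM A μ W b jstar x i1.succ hZstar, map_zero]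
    have hvalB : ∀ i ∈ I,
        (∑ p : 𝕄 × (Fin N × S),
          (fun p : 𝕄 × (Fin N × S) => if GoodP b jstar Sstar p then b p.1 else 0) p *
            (((fun (p : 𝕄 × (Fin N × S)) (z : X) =>
                ψ p (fun z' => if z' = z then (1:ℝ) else 0)) *ᵥ
                  hatGtot pM A μ W b jstar x i) p *
              mEvec W b jstar x i p)) = 0 := by
      intro i hi
      rw [hI, Finset.mem_filter] at hi
      have hmax := hi.2
      have h0 : (0:ℝ) ≤ φL (hatGtot pM A μ W b jstar x i) + (if i = 0 then -(Cb+2) else 0) := by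
        have h6 := hmax i1.succ
        rw [hβsucc i1, hfstar0] at h6
        linarith
      rcases Fin.eq_zero_or_eq_succ i with rfl|⟨j, rfl⟩
      · exfalso; linarith [hsc0]
      · by_cases hz : 0 < hatZ pM A μ W b jstar x j.succ
        · rw [hval j.succ j rfl hz]
          have hnum00 : (∑ p ∈ Finset.univ.filter (GoodP b jstar Sstar),
              b p.1 * (numH pM A μ W b jstar x j.succ p * W (x j) p.1 p.2)) = 0 := by
            refine Finset.sum_eq_zero fun p hp => ?_
            have hnw : numH pM A μ W b jstar x j.succ p * W (x j) p.1 p.2 = 0 := by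
              unfold numH
              rw [Finset.sum_mul]
              refine Finset.sum_eq_zero fun m _ => ?_
              by_cases hc : m p.2.1 = p.1
              · rw [if_pos hc]
                have h5 := hBem j.succ m p.2
                simp only [hatEm_succ W b jstar m x j] at h5
                rw [hc] at h5
                calc pM m * hatJointAt A μ W b jstar m x j.succ p.2 * W (x j) p.1 p.2
                    = pM m * (W (x j) p.1 p.2 * hatJointAt A μ W b jstar m x j.succ p.2) := by
                      ring
                  _ = 0 := h5
              · rw [if_neg hc, zero_mul]
            rw [hnw, mul_zero]
          rw [hnum00, zero_div]
        · rw [hatGtot_eq_zero pM A μ W b jstar x j.succ hz]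
          refine Finset.sum_eq_zero fun p _ => ?_
          rw [hΘV (0 : X → ℝ) p, map_zero, zero_mul, mul_zero]
    have hsum0 : (∑ i ∈ I, ∑ p : 𝕄 × (Fin N × S),
          (fun p : 𝕄 × (Fin N × S) => if GoodP b jstar Sstar p then b p.1 else 0) p *
            (((fun (p : 𝕄 × (Fin N × S)) (z : X) =>
                ψ p (fun z' => if z' = z then (1:ℝ) else 0)) *ᵥ
                  hatGtot pM A μ W b jstar x i) p *
              mEvec W b jstar x i p)) = 0 :=
      Finset.sum_eq_zero hvalB
    rw [hLHSeq, hBD, zero_div, hsum0, mul_zero]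
end
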